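/- Let (Ω, μ) be a measure space, p₁,…,pₙ ∈ (1,∞) with Σ 1/pᵢ = 1, and fᵢ ∈ L^{pᵢ} nonnegative with ‖fᵢ‖_{pᵢ} > 0. Then (Π ‖fᵢ‖_{pᵢ}) · max{0, 1 − p_max · Σᵢ (1/pᵢ) ‖ fᵢ^{pᵢ/2}/‖fᵢ‖_{pᵢ}^{pᵢ/2} − Σ_k (1/p_k) f_k^{p_k/2}/‖f_k‖_{p_k}^{p_k/2} ‖₂² } ≤ ‖Π fᵢ‖₁. -/

import Mathlib

open Real MeasureTheory Finset


/-- Three-term weighted AM-GM core lemma. -/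
lemma lemA (a C t h : ℝ) (ha : 0 < a) (ha1 : a < 1) (hCa : 1 ≤ C * a)
    (hCA : 1 ≤ C * (1 - a)) (ht : 0 ≤ t) (hh : 0 ≤ h) :
    2 * (C * a * (1 - a)) * (t * h) ≤
      t ^ (2 * a) * h ^ (2 * (1 - a)) + a * (C * (1 - a) - 1) * t ^ 2
        + (1 - a) * (C * a - 1) * h ^ 2 := by
  have hA : (0:ℝ) < 1 - a := by linarith
  have hC : 0 < C := by nlinarith
  obtain ⟨K, hKdef⟩ : ∃ K : ℝ, K = 2 * (C * a * (1 - a)) := ⟨_, rfl⟩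
  have hK : (0:ℝ) < K := by rw [hKdef]; positivity
  obtain ⟨w₁, hw₁def⟩ : ∃ w : ℝ, w = 1 / K := ⟨_, rfl⟩
  obtain ⟨w₂, hw₂def⟩ : ∃ w : ℝ, w = a * (C * (1 - a) - 1) / K := ⟨_, rfl⟩
  obtain ⟨w₃, hw₃def⟩ : ∃ w : ℝ, w = (1 - a) * (C * a - 1) / K := ⟨_, rfl⟩
  have hw₁ : 0 ≤ w₁ := by rw [hw₁def]; positivity
  have hw₂ : 0 ≤ w₂ := by
    rw [hw₂def]; apply div_nonneg _ hK.le; nlinarith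
  have hw₃ : 0 ≤ w₃ := by
    rw [hw₃def]; apply div_nonneg _ hK.le; nlinarith
  have hwsum : w₁ + w₂ + w₃ = 1 := by
    rw [hw₁def, hw₂def, hw₃def, hKdef]; field_simp; ring
  have hp₁ : (0:ℝ) ≤ K * (t ^ (2*a) * h ^ (2*(1-a))) := by positivity
  have hp₂ : (0:ℝ) ≤ K * t ^ 2 := by positivity
  have hp₃ : (0:ℝ) ≤ K * h ^ 2 := by positivity
  have amgm := Real.geom_mean_le_arith_mean3_weighted hw₁ hw₂ hw₃ hp₁ hp₂ hp₃ hwsum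
  have e1 : 2 * a * w₁ + ((2:ℕ):ℝ) * w₂ = 1 := by
    rw [hw₁def, hw₂def, hKdef]; push_cast; field_simp; ring
  have e2 : 2 * (1-a) * w₁ + ((2:ℕ):ℝ) * w₃ = 1 := by
    rw [hw₁def, hw₃def, hKdef]; push_cast; field_simp; ring
  have hgeom : (K * (t ^ (2*a) * h ^ (2*(1-a)))) ^ w₁ * (K * t ^ 2) ^ w₂ *
      (K * h ^ 2) ^ w₃ = K * (t * h) := by
    have ht2 : (t:ℝ) ^ (2:ℕ) = t ^ ((2:ℕ):ℝ) := (Real.rpow_natCast t 2).symm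
    have hh2 : (h:ℝ) ^ (2:ℕ) = h ^ ((2:ℕ):ℝ) := (Real.rpow_natCast h 2).symm
    have s1 : (K * (t ^ (2*a) * h ^ (2*(1-a)))) ^ w₁
        = K ^ w₁ * (t ^ (2*a*w₁) * h ^ (2*(1-a)*w₁)) := by
      rw [Real.mul_rpow hK.le (by positivity)]
      congr 1
      rw [Real.mul_rpow (by positivity) (by positivity),
        ← Real.rpow_mul ht, ← Real.rpow_mul hh]
    have s2 : (K * t ^ (2:ℕ)) ^ w₂ = K ^ w₂ * t ^ (((2:ℕ):ℝ) * w₂) := by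
      rw [ht2, Real.mul_rpow hK.le (by positivity), ← Real.rpow_mul ht]
    have s3 : (K * h ^ (2:ℕ)) ^ w₃ = K ^ w₃ * h ^ (((2:ℕ):ℝ) * w₃) := by
      rw [hh2, Real.mul_rpow hK.le (by positivity), ← Real.rpow_mul hh]
    rw [s1, s2, s3]
    have eK : K ^ w₁ * K ^ w₂ * K ^ w₃ = K := by
      rw [← Real.rpow_add hK, ← Real.rpow_add hK, hwsum, Real.rpow_one]
    calc K ^ w₁ * (t ^ (2*a*w₁) * h ^ (2*(1-a)*w₁)) * (K ^ w₂ * t ^ (((2:ℕ):ℝ) * w₂)) *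
          (K ^ w₃ * h ^ (((2:ℕ):ℝ) * w₃))
        = (K ^ w₁ * K ^ w₂ * K ^ w₃) * ((t ^ (2*a*w₁) * t ^ (((2:ℕ):ℝ) * w₂)) *
            (h ^ (2*(1-a)*w₁) * h ^ (((2:ℕ):ℝ) * w₃))) := by ring
      _ = K * (t * h) := by
          rw [← Real.rpow_add' ht (by rw [e1]; norm_num),
            ← Real.rpow_add' hh (by rw [e2]; norm_num),
            e1, e2, Real.rpow_one, Real.rpow_one, eK]
  rw [hgeom] at amgm
  have harith : w₁ * (K * (t ^ (2*a) * h ^ (2*(1-a)))) + w₂ * (K * t ^ 2) + w₃ * (K * h ^ 2)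
      = t ^ (2*a) * h ^ (2*(1-a)) + a * (C * (1 - a) - 1) * t ^ 2 + (1-a) * (C*a-1) * h ^ 2 := by
    rw [hw₁def, hw₂def, hw₃def]; field_simp
  rw [harith] at amgm
  calc 2 * (C * a * (1 - a)) * (t * h) = K * (t * h) := by rw [hKdef]
    _ ≤ _ := amgm

set_option maxHeartbeats 2000000 in
/-- Induction-step lemma. -/
lemma lemB (a C σ q h t : ℝ) (ha : 0 < a) (ha1 : a < 1) (hCa : 1 ≤ C * a)
    (hCA : 1 ≤ C * (1 - a)) (hσ : 0 ≤ σ) (hh : 0 ≤ h) (ht : 0 ≤ t)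
    (hq : h ^ 2 ≤ q)
    (hIH : C * (1 - a) * h ^ 2 - (C * (1 - a) - 1) * q ≤ σ) :
    C * (a * t + (1 - a) * h) ^ 2 - (C - 1) * (a * t ^ 2 + (1 - a) * q) ≤
      t ^ (2 * a) * σ ^ (1 - a) := by
  have hA : (0:ℝ) < 1 - a := by linarith
  have hC1 : 1 < C := by nlinarith
  have hc : 0 ≤ C * (1 - a) - 1 := by linarith
  have hrpow_nonneg : (0:ℝ) ≤ t ^ (2 * a) * σ ^ (1 - a) := by positivity
  rcases eq_or_lt_of_le hh with hh0 | hh0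
  · -- h = 0
    subst hh0
    have hq0 : 0 ≤ q := by nlinarith
    nlinarith [hrpow_nonneg, mul_nonneg (mul_nonneg ha.le hc) (sq_nonneg t),
      mul_nonneg (mul_nonneg (sub_nonneg.2 hC1.le) hA.le) hq0]
  · -- h > 0
    have hh2 : (0:ℝ) < h ^ 2 := by positivity
    obtain ⟨σ', hσ'def⟩ : ∃ x : ℝ, x = min σ (h ^ 2) := ⟨_, rfl⟩
    have hσ'0 : 0 ≤ σ' := by rw [hσ'def]; exact le_min hσ hh2.le
    have hσ'h : σ' ≤ h ^ 2 := by rw [hσ'def]; exact min_le_right _ _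
    have hσ'σ : σ' ≤ σ := by rw [hσ'def]; exact min_le_left _ _
    have hσ'IH : C * (1 - a) * h ^ 2 - (C * (1 - a) - 1) * q ≤ σ' := by
      rw [hσ'def]
      refine le_min hIH ?_
      nlinarith [mul_le_mul_of_nonneg_left hq hc]
    obtain ⟨lam, hlamdef⟩ : ∃ x : ℝ, x = σ' / h ^ 2 := ⟨_, rfl⟩
    have hlam0 : 0 ≤ lam := by rw [hlamdef]; positivity
    have hlam1 : lam ≤ 1 := by rw [hlamdef]; exact (div_le_one hh2).2 hσ'h
    have hσ'eq : σ' = lam * h ^ 2 := by rw [hlamdef]; field_simp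
    -- σ ^ (1-a) ≥ lam * h ^ (2*(1-a))
    have hpow : lam * h ^ (2 * (1 - a)) ≤ σ ^ (1 - a) := by
      have b1 : σ' ^ (1 - a) ≤ σ ^ (1 - a) :=
        Real.rpow_le_rpow hσ'0 hσ'σ hA.le
      have b2 : lam * h ^ (2 * (1 - a)) ≤ σ' ^ (1 - a) := by
        have hh2r : (h ^ 2 : ℝ) ^ (1 - a) = h ^ (2 * (1 - a)) := by
          rw [← Real.rpow_natCast h 2, ← Real.rpow_mul hh]
          norm_num
        rw [hσ'eq, Real.mul_rpow hlam0 hh2.le, hh2r]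
        rcases eq_or_lt_of_le hlam0 with h0 | h0
        · simp [← h0, Real.zero_rpow (show (1:ℝ) - a ≠ 0 by linarith)]
        · apply mul_le_mul_of_nonneg_right _ (by positivity)
          calc lam = lam ^ (1:ℝ) := (Real.rpow_one lam).symm
            _ ≤ lam ^ (1 - a) := Real.rpow_le_rpow_of_exponent_ge h0 hlam1 (by linarith)
      exact b2.trans b1
    have hchain : lam * (t ^ (2*a) * h ^ (2*(1-a))) ≤ t ^ (2*a) * σ ^ (1-a) := by
      calc lam * (t ^ (2*a) * h ^ (2*(1-a))) = t ^ (2*a) * (lam * h ^ (2*(1-a))) := by ring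
        _ ≤ t ^ (2*a) * σ ^ (1-a) :=
            mul_le_mul_of_nonneg_left hpow (by positivity)
    have key := lemA a C t h ha ha1 hCa hCA ht hh
    -- remaining polynomial inequality
    have hconstr : (C * (1-a) - 1) * q + lam * h ^ 2 ≥ C * (1-a) * h ^ 2 := by
      rw [← hσ'eq]; linarith
    have hpoly : C * (a * t + (1 - a) * h) ^ 2 - (C - 1) * (a * t ^ 2 + (1 - a) * q) ≤
        lam * (2 * (C * a * (1-a)) * (t * h) - a * (C * (1-a) - 1) * t ^ 2
          - (1 - a) * (C * a - 1) * h ^ 2) := by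
      rcases eq_or_lt_of_le hc with hc0 | hc0
      · -- c = 0 : then lam = 1
        have hcq : (C * (1-a) - 1) * q = 0 := by rw [← hc0, zero_mul]
        have hch : C * (1-a) = 1 := by linarith
        have hlam : 1 ≤ lam := by
          nlinarith [hconstr, hcq, hch, hh2, mul_pos hh2 hh2]
        have hlam' : lam = 1 := le_antisymm hlam1 hlam
        rw [hlam', one_mul]
        nlinarith [hch, hcq, mul_nonneg (sub_nonneg.2 hC1.le) (sub_nonneg.2 hq)]
      · -- c > 0
        have k1 : 0 ≤ (1 - lam) * (a * ((C * (1-a) - 1) * t - C * (1-a) * h) ^ 2) :=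
          mul_nonneg (by linarith) (by positivity)
        have k2' : 0 ≤ (C * (1-a) - 1) * (q - h ^ 2) - (1 - lam) * h ^ 2 := by nlinarith [hconstr]
        have k2 : 0 ≤ (1-a) * (C - 1) * ((C * (1-a) - 1) * (q - h ^ 2) - (1 - lam) * h ^ 2) :=
          mul_nonneg (mul_nonneg hA.le (by linarith)) k2'
        have hid : (C * (1-a) - 1) * ((lam * (2 * (C * a * (1-a)) * (t * h) - a * (C * (1-a) - 1) * t ^ 2
              - (1 - a) * (C * a - 1) * h ^ 2)) - (C * (a * t + (1 - a) * h) ^ 2 - (C - 1) * (a * t ^ 2 + (1 - a) * q)))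
            = (1-a) * (C - 1) * ((C * (1-a) - 1) * (q - h ^ 2) - (1 - lam) * h ^ 2)
              + (1 - lam) * (a * ((C * (1-a) - 1) * t - C * (1-a) * h) ^ 2) := by ring
        have hpos : 0 ≤ (C * (1-a) - 1) * ((lam * (2 * (C * a * (1-a)) * (t * h) - a * (C * (1-a) - 1) * t ^ 2
              - (1 - a) * (C * a - 1) * h ^ 2)) - (C * (a * t + (1 - a) * h) ^ 2 - (C - 1) * (a * t ^ 2 + (1 - a) * q))) := by
          rw [hid]; exact add_nonneg k2 k1
        nlinarith [hpos, hc0]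
    calc C * (a * t + (1 - a) * h) ^ 2 - (C - 1) * (a * t ^ 2 + (1 - a) * q)
        ≤ lam * (2 * (C * a * (1-a)) * (t * h) - a * (C * (1-a) - 1) * t ^ 2
            - (1 - a) * (C * a - 1) * h ^ 2) := hpoly
      _ ≤ lam * (t ^ (2*a) * h ^ (2*(1-a))) := by
          apply mul_le_mul_of_nonneg_left _ hlam0
          linarith [key]
      _ ≤ t ^ (2*a) * σ ^ (1-a) := hchain

/-- Jensen: for probability weights, square of mean ≤ mean of squares. -/
lemma jensen_sq {ι : Type*} (s : Finset ι) (β t : ι → ℝ) (hβ : ∀ i ∈ s, 0 ≤ β i)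
    (hsum : ∑ i ∈ s, β i = 1) :
    (∑ i ∈ s, β i * t i) ^ 2 ≤ ∑ i ∈ s, β i * t i ^ 2 := by
  have := Finset.sum_sq_le_sum_mul_sum_of_sq_eq_mul s (r := fun i => β i * t i)
    (f := β) (g := fun i => β i * t i ^ 2) hβ
    (fun i hi => mul_nonneg (hβ i hi) (sq_nonneg _))
    (fun i hi => by ring)
  rw [hsum, one_mul] at this
  exact this

/-- Pointwise refined AM-GM: `∏ tᵢ^(2αᵢ) ≥ C (∑ αᵢ tᵢ)² − (C−1) ∑ αᵢ tᵢ²`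
for probability weights `α` and `C ≥ 1/αᵢ`. -/
lemma pointwise_amgm {ι : Type*} (s : Finset ι) :
    ∀ (α t : ι → ℝ) (C : ℝ), (∀ i ∈ s, 0 < α i) → (∀ i ∈ s, 0 ≤ t i) →
      (∀ i ∈ s, 1 ≤ C * α i) → (∑ i ∈ s, α i) = 1 →
      C * (∑ i ∈ s, α i * t i) ^ 2 - (C - 1) * (∑ i ∈ s, α i * t i ^ 2) ≤
        ∏ i ∈ s, t i ^ (2 * α i) := by
  induction s using Finset.cons_induction with
  | empty => intro α t C hα ht hC hsum; simp at hsum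
  | cons j s' hj ih =>
    intro α t C hα ht hC hsum
    rw [Finset.sum_cons] at hsum
    have htj : 0 ≤ t j := ht j (Finset.mem_cons_self _ _)
    have hαj : 0 < α j := hα j (Finset.mem_cons_self _ _)
    have hCj : 1 ≤ C * α j := hC j (Finset.mem_cons_self _ _)
    rcases s'.eq_empty_or_nonempty with rfl | hne
    · simp only [Finset.sum_empty, add_zero] at hsum
      rw [Finset.sum_cons, Finset.sum_cons, Finset.prod_cons]
      simp only [Finset.sum_empty, Finset.prod_empty, add_zero, mul_one, hsum]
      rw [Real.rpow_two]
      nlinarith [sq_nonneg (t j)]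
    · have hA : 0 < ∑ i ∈ s', α i :=
        Finset.sum_pos (fun i hi => hα i (Finset.mem_cons_of_mem hi)) hne
      obtain ⟨A, hAdef⟩ : ∃ x : ℝ, x = ∑ i ∈ s', α i := ⟨_, rfl⟩
      have hA0 : 0 < A := hAdef ▸ hA
      have hAsum : α j + A = 1 := by rw [hAdef]; exact hsum
      have haj1 : α j < 1 := by linarith
      have hA1 : A = 1 - α j := by linarith
      obtain ⟨k, hk⟩ := hne
      have hCpos : 0 < C := by
        have := hCj; nlinarith
      have hCA : 1 ≤ C * A := by
        have hak : α k ≤ A := by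
          rw [hAdef]
          exact Finset.single_le_sum (fun i hi => (hα i (Finset.mem_cons_of_mem hi)).le) hk
        calc (1:ℝ) ≤ C * α k := hC k (Finset.mem_cons_of_mem hk)
          _ ≤ C * A := by nlinarith
      -- normalized weights on s'
      have hβpos : ∀ i ∈ s', 0 < α i / A := fun i hi =>
        div_pos (hα i (Finset.mem_cons_of_mem hi)) hA0
      have hβsum : ∑ i ∈ s', α i / A = 1 := by
        rw [← Finset.sum_div, ← hAdef, div_self hA0.ne']
      have hβC : ∀ i ∈ s', 1 ≤ C * A * (α i / A) := by
        intro i hi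
        have : C * A * (α i / A) = C * α i := by field_simp
        rw [this]; exact hC i (Finset.mem_cons_of_mem hi)
      have IH := ih (fun i => α i / A) t (C * A) hβpos
        (fun i hi => ht i (Finset.mem_cons_of_mem hi)) hβC hβsum
      obtain ⟨h, hhdef⟩ : ∃ x : ℝ, x = ∑ i ∈ s', (α i / A) * t i := ⟨_, rfl⟩
      obtain ⟨q, hqdef⟩ : ∃ x : ℝ, x = ∑ i ∈ s', (α i / A) * t i ^ 2 := ⟨_, rfl⟩
      obtain ⟨σ, hσdef⟩ : ∃ x : ℝ, x = ∏ i ∈ s', t i ^ (2 * (α i / A)) := ⟨_, rfl⟩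
      have hσ0 : 0 ≤ σ := by
        rw [hσdef]
        exact Finset.prod_nonneg fun i hi =>
          Real.rpow_nonneg (ht i (Finset.mem_cons_of_mem hi)) _
      have hh0 : 0 ≤ h := by
        rw [hhdef]
        exact Finset.sum_nonneg fun i hi =>
          mul_nonneg (hβpos i hi).le (ht i (Finset.mem_cons_of_mem hi))
      have hq0 : h ^ 2 ≤ q := by
        rw [hhdef, hqdef]
        exact jensen_sq s' _ t (fun i hi => (hβpos i hi).le) hβsum
      have hIH2 : C * A * h ^ 2 - (C * A - 1) * q ≤ σ := by
        rw [hhdef, hqdef, hσdef]; nlinarith [IH]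
      have main := lemB (α j) C σ q h (t j) hαj haj1 hCj (hA1 ▸ hCA) hσ0 hh0 htj hq0
        (by rw [← hA1]; exact hIH2)
      -- rewrite sums and product
      have hsum1 : ∑ i ∈ Finset.cons j s' hj, α i * t i = α j * t j + A * h := by
        rw [Finset.sum_cons, hhdef, Finset.mul_sum]
        congr 1
        apply Finset.sum_congr rfl
        intro i hi
        field_simp
      have hsum2 : ∑ i ∈ Finset.cons j s' hj, α i * t i ^ 2 = α j * t j ^ 2 + A * q := by
        rw [Finset.sum_cons, hqdef, Finset.mul_sum]
        congr 1
        apply Finset.sum_congr rfl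
        intro i hi
        field_simp
      have hprod : ∏ i ∈ Finset.cons j s' hj, t i ^ (2 * α i) = t j ^ (2 * α j) * σ ^ A := by
        rw [Finset.prod_cons, hσdef]
        congr 1
        rw [← Real.finset_prod_rpow s' _ (fun i hi =>
          Real.rpow_nonneg (ht i (Finset.mem_cons_of_mem hi)) _) A]
        apply Finset.prod_congr rfl
        intro i hi
        rw [← Real.rpow_mul (ht i (Finset.mem_cons_of_mem hi))]
        congr 1
        field_simp
      rw [hsum1, hsum2, hprod, hA1]
      exact main

set_option maxHeartbeats 2000000 in
open MeasureTheory in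
theorem refined_holder_lower {Ω : Type*} [MeasurableSpace Ω] (μ : Measure Ω)
    (n : ℕ) (hn : 1 ≤ n) (p : Fin n → ℝ) (hp : ∀ i, 1 < p i)
    (hps : ∑ i, 1 / p i = 1)
    (f : Fin n → Ω → ℝ) (hmeas : ∀ i, Measurable (f i))
    (hnonneg : ∀ i, ∀ u, 0 ≤ f i u)
    (hint : ∀ i, Integrable (fun u => f i u ^ p i) μ)
    (N : Fin n → ℝ) (hN : ∀ i, N i = (∫ u, f i u ^ p i ∂μ) ^ (1 / p i))
    (hNpos : ∀ i, 0 < N i) :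
    (∏ i, N i) *
        max 0 (1 - (⨆ i, p i) *
          ∑ i, (1 / p i) *
            ∫ u, (f i u ^ (p i / 2) / N i ^ (p i / 2) -
              ∑ k, (1 / p k) * (f k u ^ (p k / 2) / N k ^ (p k / 2))) ^ 2 ∂μ) ≤
      ∫ u, ∏ i, f i u ∂μ := by
  have hp0 : ∀ i, 0 < p i := fun i => lt_trans one_pos (hp i)
  have hα0 : ∀ i, 0 < 1 / p i := fun i => one_div_pos.2 (hp0 i)
  obtain ⟨C, hCdef⟩ : ∃ x : ℝ, x = ⨆ i, p i := ⟨_, rfl⟩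
  have hCp : ∀ i, p i ≤ C := by
    intro i
    rw [hCdef]
    exact le_ciSup (Set.Finite.bddAbove (Set.finite_range p)) i
  have hCα : ∀ i, 1 ≤ C * (1 / p i) := by
    intro i
    rw [mul_one_div, le_div_iff₀ (hp0 i), one_mul]
    exact hCp i
  have hintnn : ∀ i, 0 ≤ ∫ u, f i u ^ p i ∂μ :=
    fun i => integral_nonneg fun u => Real.rpow_nonneg (hnonneg i u) _
  have hNp : ∀ i, N i ^ p i = ∫ u, f i u ^ p i ∂μ := by
    intro i
    rw [hN i, ← Real.rpow_mul (hintnn i), one_div, inv_mul_cancel₀ (hp0 i).ne',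
      Real.rpow_one]
  have hNppos : ∀ i, 0 < N i ^ p i := fun i => Real.rpow_pos_of_pos (hNpos i) _
  set X : Fin n → Ω → ℝ := fun i u => f i u ^ p i / N i ^ p i with hXd
  set T : Fin n → Ω → ℝ := fun i u => f i u ^ (p i / 2) / N i ^ (p i / 2) with hTd
  set M : Ω → ℝ := fun u => ∑ k, 1 / p k * T k u with hMd
  have hTnn : ∀ i u, 0 ≤ T i u := fun i u =>
    div_nonneg (Real.rpow_nonneg (hnonneg i u) _) (Real.rpow_nonneg (hNpos i).le _)
  have hXnn : ∀ i u, 0 ≤ X i u := fun i u =>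
    div_nonneg (Real.rpow_nonneg (hnonneg i u) _) (hNppos i).le
  have hsq : ∀ (x r : ℝ), 0 ≤ x → (x ^ (r / 2)) ^ 2 = x ^ r := by
    intro x r hx
    rw [← Real.rpow_two, ← Real.rpow_mul hx]
    congr 1
    ring
  have hT2 : ∀ i u, T i u ^ 2 = X i u := by
    intro i u
    simp only [hTd, hXd]
    rw [div_pow, hsq _ _ (hnonneg i u), hsq _ _ (hNpos i).le]
  have hXrpow : ∀ i u, X i u ^ (1 / p i) = f i u / N i := by
    intro i u
    simp only [hXd]
    rw [Real.div_rpow (Real.rpow_nonneg (hnonneg i u) _) (hNppos i).le,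
      ← Real.rpow_mul (hnonneg i u), ← Real.rpow_mul (hNpos i).le,
      mul_one_div, div_self (hp0 i).ne', Real.rpow_one, Real.rpow_one]
  have hXint : ∀ i, Integrable (X i) μ := fun i => (hint i).div_const _
  have hXval : ∀ i, ∫ u, X i u ∂μ = 1 := by
    intro i
    simp only [hXd]
    rw [integral_div, ← hNp i, div_self (hNppos i).ne']
  have hTmeas : ∀ i, Measurable (T i) := by
    intro i
    simp only [hTd]
    exact ((Real.continuous_rpow_const (by linarith [hp0 i] : (0:ℝ) ≤ p i / 2)).measurable.comp
      (hmeas i)).div_const _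
  have hT2int : ∀ i, Integrable (fun u => T i u ^ 2) μ := fun i =>
    (hXint i).congr (ae_of_all _ fun u => (hT2 i u).symm)
  have hTL2 : ∀ i, MemLp (T i) 2 μ := fun i =>
    (memLp_two_iff_integrable_sq (hTmeas i).aestronglyMeasurable).2 (hT2int i)
  have hML2 : MemLp M 2 μ := by
    simp only [hMd]
    exact memLp_finset_sum _ (fun k _ => (hTL2 k).const_mul _)
  have hVint : ∀ i, Integrable (fun u => (T i u - M u) ^ 2) μ := fun i =>
    ((hTL2 i).sub hML2).integrable_sq
  have hEint : Integrable (fun u => ∑ i, 1 / p i * T i u ^ 2) μ :=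
    integrable_finset_sum _ fun i _ => (hT2int i).const_mul _
  have hVsum : Integrable (fun u => ∑ i, 1 / p i * (T i u - M u) ^ 2) μ :=
    integrable_finset_sum _ fun i _ => (hVint i).const_mul _
  have hPN : 0 < ∏ i, N i := Finset.prod_pos fun i _ => hNpos i
  have hProdnn : ∀ u, 0 ≤ ∏ i, f i u := fun u =>
    Finset.prod_nonneg fun i _ => hnonneg i u
  have hPmeas : Measurable fun u => ∏ i, f i u :=
    Finset.measurable_prod _ fun i _ => hmeas i
  have hXprod : ∀ u, ∏ i, X i u ^ (1 / p i) = (∏ i, f i u) / ∏ i, N i := by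
    intro u
    rw [← Finset.prod_div_distrib]
    exact Finset.prod_congr rfl fun i _ => hXrpow i u
  have hProdInt : Integrable (fun u => ∏ i, f i u) μ := by
    apply Integrable.mono'
      ((integrable_finset_sum (μ := μ) Finset.univ
        (fun i (_ : i ∈ Finset.univ) => (hXint i).const_mul (1 / p i))).const_mul (∏ i, N i))
      hPmeas.aestronglyMeasurable
    apply ae_of_all
    intro u
    rw [Real.norm_eq_abs, abs_of_nonneg (hProdnn u)]
    have gm := Real.geom_mean_le_arith_mean_weighted Finset.univ (fun i => 1 / p i)
      (fun i => X i u) (fun i _ => (hα0 i).le) hps (fun i _ => hXnn i u)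
    rw [hXprod u] at gm
    calc ∏ i, f i u = (∏ i, N i) * ((∏ i, f i u) / ∏ i, N i) := by field_simp
      _ ≤ (∏ i, N i) * ∑ i, 1 / p i * X i u := by
          exact mul_le_mul_of_nonneg_left gm hPN.le
  have hRHSint : Integrable (fun u => (∏ i, f i u) / ∏ i, N i) μ := hProdInt.div_const _
  -- pointwise inequality
  have hpt : ∀ u, (∑ i, 1 / p i * T i u ^ 2) - C * ∑ i, 1 / p i * (T i u - M u) ^ 2 ≤
      (∏ i, f i u) / ∏ i, N i := by
    intro u
    have h1 := pointwise_amgm Finset.univ (fun i => 1 / p i) (fun i => T i u) C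
      (fun i _ => hα0 i) (fun i _ => hTnn i u) (fun i _ => hCα i) hps
    have hMu : M u = ∑ i, 1 / p i * T i u := by simp only [hMd]
    rw [← hMu] at h1
    have hprod_eq : ∏ i, T i u ^ (2 * (1 / p i)) = (∏ i, f i u) / ∏ i, N i := by
      rw [← hXprod u]
      apply Finset.prod_congr rfl
      intro i _
      rw [Real.rpow_mul (hTnn i u), Real.rpow_two, hT2 i u]
    rw [hprod_eq] at h1
    have hVE : ∑ i, 1 / p i * (T i u - M u) ^ 2 =
        (∑ i, 1 / p i * T i u ^ 2) - M u ^ 2 := by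
      have expand : ∀ i : Fin n, 1 / p i * (T i u - M u) ^ 2 =
          1 / p i * T i u ^ 2 - 2 * M u * (1 / p i * T i u) + M u ^ 2 * (1 / p i) :=
        fun i => by ring
      rw [Finset.sum_congr rfl fun i _ => expand i, Finset.sum_add_distrib,
        Finset.sum_sub_distrib, ← Finset.mul_sum, ← Finset.mul_sum, ← hMu, hps]
      ring
    rw [hVE]
    linarith [h1]
  have mono := integral_mono
    (f := fun u => (∑ i, 1 / p i * T i u ^ 2) - C * ∑ i, 1 / p i * (T i u - M u) ^ 2)
    (g := fun u => (∏ i, f i u) / ∏ i, N i)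
    (hEint.sub (hVsum.const_mul C)) hRHSint hpt
  -- compute the left integral
  have hEval : ∫ u, ∑ i, 1 / p i * T i u ^ 2 ∂μ = 1 := by
    rw [integral_finset_sum _ fun i _ => (hT2int i).const_mul _]
    have : ∀ i : Fin n, ∫ u, 1 / p i * T i u ^ 2 ∂μ = 1 / p i := by
      intro i
      rw [integral_const_mul, integral_congr_ae (ae_of_all _ fun u => hT2 i u), hXval i,
        mul_one]
    rw [Finset.sum_congr rfl fun i _ => this i, hps]
  have hVval : ∫ u, ∑ i, 1 / p i * (T i u - M u) ^ 2 ∂μ =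
      ∑ i, 1 / p i * ∫ u, (T i u - M u) ^ 2 ∂μ := by
    rw [integral_finset_sum _ fun i _ => (hVint i).const_mul _]
    exact Finset.sum_congr rfl fun i _ => integral_const_mul _ _
  have hLHSval : ∫ u, ((∑ i, 1 / p i * T i u ^ 2) - C * ∑ i, 1 / p i * (T i u - M u) ^ 2) ∂μ
      = 1 - C * ∑ i, 1 / p i * ∫ u, (T i u - M u) ^ 2 ∂μ := by
    rw [integral_sub hEint (hVsum.const_mul C), integral_const_mul, hEval, hVval]
  have hRHSval : ∫ u, ((∏ i, f i u) / ∏ i, N i) ∂μ = (∫ u, ∏ i, f i u ∂μ) / ∏ i, N i :=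
    integral_div _ _
  rw [hLHSval, hRHSval] at mono
  -- conclude
  have final : (∏ i, N i) *
      max 0 (1 - C * ∑ i, 1 / p i * ∫ u, (T i u - M u) ^ 2 ∂μ) ≤ ∫ u, ∏ i, f i u ∂μ := by
    rcases le_or_gt (1 - C * ∑ i, 1 / p i * ∫ u, (T i u - M u) ^ 2 ∂μ) 0 with hc | hc
    · rw [max_eq_left hc, mul_zero]
      exact integral_nonneg fun u => hProdnn u
    · rw [max_eq_right hc.le]
      rw [mul_comm]
      exact (le_div_iff₀ hPN).1 mono
  simp only [hMd, hTd, hCdef] at final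
  exact final
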